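/- The number of gap-free k-ary words of length m with exactly j distinct letters is (k - j + 1) · j! · S(m, j), where S(m,j) is the Stirling number of the second kind; hence the total number of gap-free k-ary words of length m is Σ_{j=1}^k (k-j+1) j! S(m,j), which is asymptotic to k^m as m → ∞. -/

import Mathlib

/-- Stirling numbers of the second kind. -/
def stirling2 : ℕ → ℕ → ℕ
  | 0, 0 => 1
  | 0, _ + 1 => 0
  | _ + 1, 0 => 0
  | m + 1, j + 1 => (j + 1) * stirling2 m (j + 1) + stirling2 m j

open Finset

lemma image_cons {m : ℕ} {β : Type} [DecidableEq β] (a : β) (f : Fin m → β) :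
    Finset.image (Fin.cons a f) Finset.univ = insert a (Finset.image f Finset.univ) := by
  ext b; simp [Fin.exists_fin_succ, eq_comm]

lemma count_image_eq {β : Type} [Fintype β] [DecidableEq β] :
    ∀ (m : ℕ) (s : Finset β),
      (univ.filter fun w : Fin m → β => image w univ = s).card
        = s.card.factorial * stirling2 m s.card := by
  intro m
  induction m with
  | zero =>
    intro s
    rcases eq_or_ne s ∅ with rfl | hs
    · rw [Finset.filter_true_of_mem (by simp), Finset.card_univ]
      simp [stirling2]
    · rw [Finset.filter_false_of_mem (by simpa using Ne.symm hs)]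
      obtain ⟨c, hc⟩ := Nat.exists_eq_succ_of_ne_zero (fun h => hs (Finset.card_eq_zero.mp h))
      simp [hc, stirling2]
  | succ m ih =>
    intro s
    -- reindex words over Fin (m+1) as pairs (head, tail)
    have hcons : (univ.filter fun w : Fin (m+1) → β => image w univ = s).card
        = (univ.filter fun p : β × (Fin m → β) =>
            insert p.1 (image p.2 univ) = s).card := by
      apply Finset.card_equiv (Fin.consEquiv fun _ => β).symm
      intro w
      simp only [mem_filter, mem_univ, true_and, Fin.consEquiv_symm_apply]
      rw [← image_cons (w 0) (Fin.tail w), Fin.cons_self_tail]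
    rw [hcons]
    rw [Finset.card_filter, Fintype.sum_prod_type]
    have inner : ∀ a : β, (∑ f : Fin m → β,
        if insert a (image f univ) = s then 1 else 0)
        = if a ∈ s then s.card.factorial * stirling2 m s.card
            + (s.erase a).card.factorial * stirling2 m (s.erase a).card else 0 := by
      intro a
      rw [← Finset.card_filter]
      by_cases ha : a ∈ s
      · have hsplit : (univ.filter fun f : Fin m → β => insert a (image f univ) = s)
            = (univ.filter fun f : Fin m → β => image f univ = s)
              ∪ (univ.filter fun f : Fin m → β => image f univ = s.erase a) := by
          rw [← Finset.filter_or]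
          apply Finset.filter_congr
          intro f _
          constructor
          · intro h
            rcases Decidable.eq_or_ne (image f univ) s with h1 | h1
            · exact Or.inl h1
            · right
              apply Finset.Subset.antisymm
              · intro x hx
                rw [Finset.mem_erase]
                constructor
                · rintro rfl
                  -- need f's image may contain a? no: if a ∈ image f, then insert a image = image
                  exact h1 (by rw [← h, Finset.insert_eq_self.mpr hx])
                · rw [← h]; exact Finset.mem_insert_of_mem hx
              · intro x hx
                rw [Finset.mem_erase] at hx
                have : x ∈ insert a (image f univ) := h ▸ hx.2
                rcases Finset.mem_insert.mp this with h2 | h2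
                · exact absurd h2 hx.1
                · exact h2
          · rintro (h1 | h1)
            · rw [h1]; exact Finset.insert_eq_self.mpr ha
            · rw [h1]; exact Finset.insert_erase ha
        rw [hsplit, Finset.card_union_of_disjoint, ih, ih, if_pos ha]
        rw [Finset.disjoint_filter]
        intro f _ h1 h2
        have h3 : s = s.erase a := h1.symm.trans h2
        exact Finset.notMem_erase a s (h3 ▸ ha)
      · rw [Finset.filter_false_of_mem, Finset.card_empty, if_neg ha]
        intro f _ h
        exact ha (h ▸ Finset.mem_insert_self a _)
    calc (∑ a : β, ∑ f : Fin m → β, if insert a (image f univ) = s then 1 else 0)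
        = ∑ a : β, if a ∈ s then s.card.factorial * stirling2 m s.card
            + (s.card - 1).factorial * stirling2 m (s.card - 1) else 0 := by
          refine Finset.sum_congr rfl fun a _ => ?_
          rw [inner a]
          by_cases ha : a ∈ s
          · rw [if_pos ha, if_pos ha, Finset.card_erase_of_mem ha]
          · rw [if_neg ha, if_neg ha]
      _ = s.card * (s.card.factorial * stirling2 m s.card
            + (s.card - 1).factorial * stirling2 m (s.card - 1)) := by
          rw [Finset.sum_ite_mem, Finset.univ_inter, Finset.sum_const, smul_eq_mul]
      _ = s.card.factorial * stirling2 (m+1) s.card := by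
          rcases Nat.eq_zero_or_eq_succ_pred s.card with hc | hc
          · rw [hc]; simp [stirling2]
          · set j := s.card - 1
            rw [hc]
            show (j+1) * ((j+1).factorial * stirling2 m (j+1) + j.factorial * stirling2 m j)
              = (j+1).factorial * ((j+1) * stirling2 m (j+1) + stirling2 m j)
            rw [Nat.factorial_succ]
            ring

lemma card_interval_sets (k j : ℕ) (hj1 : 1 ≤ j) (hjk : j ≤ k) :
    ((univ : Finset (Finset (Fin k))).filter
        fun s => (∃ a b : Fin k, s = Finset.Icc a b) ∧ s.card = j).card = k - j + 1 := by
  have hk : 0 < k := lt_of_lt_of_le hj1 hjk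
  have hkj : k - j < k := by omega
  set c : Fin k → Fin k := fun a => ⟨min (a.val + j - 1) (k - 1), by omega⟩ with hc
  have hmem : ∀ a : Fin k, a ≤ c a := by
    intro a
    rw [Fin.le_def]
    show a.val ≤ min (a.val + j - 1) (k - 1)
    have := a.isLt
    omega
  have himg : ((univ : Finset (Finset (Fin k))).filter
        fun s => (∃ a b : Fin k, s = Finset.Icc a b) ∧ s.card = j)
      = Finset.image (fun a => Finset.Icc a (c a)) (Finset.Iic (⟨k - j, hkj⟩ : Fin k)) := by
    ext s
    simp only [Finset.mem_filter, Finset.mem_univ, true_and, Finset.mem_image,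
      Finset.mem_Iic, Fin.le_def]
    constructor
    · rintro ⟨⟨a, b, rfl⟩, hcard⟩
      rw [Fin.card_Icc] at hcard
      have hb := b.isLt
      refine ⟨a, by omega, ?_⟩
      congr 1
      apply Fin.ext
      show min (a.val + j - 1) (k - 1) = b.val
      omega
    · rintro ⟨a, ha, rfl⟩
      refine ⟨⟨a, c a, rfl⟩, ?_⟩
      rw [Fin.card_Icc]
      show min (a.val + j - 1) (k - 1) + 1 - a.val = j
      omega
  rw [himg, Finset.card_image_of_injOn, Fin.card_Iic]
  intro a _ a' _ hIcc
  simp only at hIcc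
  have h1 : a ∈ Finset.Icc a' (c a') := hIcc ▸ Finset.mem_Icc.mpr ⟨le_refl a, hmem a⟩
  have h2 : a' ∈ Finset.Icc a (c a) := hIcc.symm ▸ Finset.mem_Icc.mpr ⟨le_refl a', hmem a'⟩
  exact le_antisymm ((Finset.mem_Icc.mp h2).1) ((Finset.mem_Icc.mp h1).1)

lemma part1 (k m j : ℕ) (hj1 : 1 ≤ j) (hjk : j ≤ k) :
    (Finset.univ.filter (fun w : Fin m → Fin k =>
        (∃ a b : Fin k, Finset.image w Finset.univ = Finset.Icc a b) ∧
        (Finset.image w Finset.univ).card = j)).card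
      = (k - j + 1) * j.factorial * stirling2 m j := by
  classical
  set T := (univ : Finset (Finset (Fin k))).filter
      (fun s => (∃ a b : Fin k, s = Finset.Icc a b) ∧ s.card = j) with hT
  rw [Finset.card_eq_sum_card_fiberwise (f := fun w => image w univ) (t := T)
    (fun w hw => by
      simp only [hT, Finset.mem_coe, Finset.mem_filter, Finset.mem_univ, true_and] at hw ⊢
      exact hw)]
  have step : ∀ I ∈ T,
      ((univ.filter (fun w : Fin m → Fin k =>
          (∃ a b : Fin k, image w univ = Finset.Icc a b) ∧ (image w univ).card = j)).filter
        (fun w => image w univ = I)).card = j.factorial * stirling2 m j := by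
    intro I hI
    simp only [hT, Finset.mem_filter, Finset.mem_univ, true_and] at hI
    rw [Finset.filter_filter]
    have heq : ∀ w : Fin m → Fin k,
        (((∃ a b : Fin k, image w univ = Finset.Icc a b) ∧ (image w univ).card = j)
          ∧ image w univ = I) ↔ image w univ = I := by
      intro w
      constructor
      · exact fun h => h.2
      · intro h; exact ⟨by rw [h]; exact ⟨hI.1, hI.2⟩, h⟩
    rw [Finset.filter_congr (fun w _ => heq w), count_image_eq, hI.2]
  rw [Finset.sum_congr rfl step, Finset.sum_const, smul_eq_mul,
    card_interval_sets k j hj1 hjk, mul_assoc]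

lemma part2 (k m : ℕ) (hm : 1 ≤ m) :
    (Finset.univ.filter (fun w : Fin m → Fin k =>
        ∃ a b : Fin k, Finset.image w Finset.univ = Finset.Icc a b)).card
      = ∑ j ∈ Finset.Icc 1 k, (k - j + 1) * j.factorial * stirling2 m j := by
  classical
  rw [Finset.card_eq_sum_card_fiberwise (f := fun w => (image w univ).card)
      (t := Finset.Icc 1 k) (fun w hw => ?_)]
  · refine Finset.sum_congr rfl fun j hj => ?_
    rw [Finset.mem_Icc] at hj
    rw [Finset.filter_filter]
    exact part1 k m j hj.1 hj.2
  · rw [Finset.mem_coe, Finset.mem_Icc]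
    have : Nonempty (Fin m) := Fin.pos_iff_nonempty.mp hm
    constructor
    · exact Finset.card_pos.mpr ((Finset.univ_nonempty).image w)
    · exact le_trans (Finset.card_le_univ _) (le_of_eq (Fintype.card_fin k))

lemma count_avoid (k m : ℕ) (i : Fin k) :
    (Finset.univ.filter (fun w : Fin m → Fin k => ∀ x, w x ≠ i)).card = (k-1)^m := by
  have heq : (Finset.univ.filter (fun w : Fin m → Fin k => ∀ x, w x ≠ i))
      = Fintype.piFinset (fun _ : Fin m => ({i}ᶜ : Finset (Fin k))) := by
    ext w
    simp [Fintype.mem_piFinset]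
  rw [heq, Fintype.card_piFinset]
  simp [Finset.card_compl]

lemma lower (k m : ℕ) (hk : 1 ≤ k) :
    k ^ m ≤ (Finset.univ.filter (fun w : Fin m → Fin k =>
        ∃ a b : Fin k, Finset.image w Finset.univ = Finset.Icc a b)).card
      + k * (k-1) ^ m := by
  classical
  have hsplit := Finset.card_filter_add_card_filter_not (s := (univ : Finset (Fin m → Fin k)))
      (p := fun w : Fin m → Fin k => ∃ a b, image w univ = Finset.Icc a b)
  have huniv : (univ : Finset (Fin m → Fin k)).card = k ^ m := by
    rw [Finset.card_univ, Fintype.card_fun, Fintype.card_fin, Fintype.card_fin]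
  have hsub : (univ.filter (fun w : Fin m → Fin k =>
        ¬ ∃ a b : Fin k, image w univ = Finset.Icc a b))
      ⊆ Finset.univ.biUnion (fun i : Fin k =>
          univ.filter (fun w : Fin m → Fin k => ∀ x, w x ≠ i)) := by
    intro w hw
    rw [Finset.mem_filter] at hw
    rw [Finset.mem_biUnion]
    by_contra h
    push_neg at h
    simp only [Finset.mem_filter, Finset.mem_univ, true_and, not_forall, not_not] at h
    apply hw.2
    refine ⟨⟨0, by omega⟩, ⟨k-1, by omega⟩, ?_⟩
    ext y
    simp only [Finset.mem_image, Finset.mem_univ, true_and, Finset.mem_Icc]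
    constructor
    · intro _
      refine ⟨Fin.le_def.mpr ?_, Fin.le_def.mpr ?_⟩
      · show 0 ≤ y.val; omega
      · show y.val ≤ k - 1; have := y.isLt; omega
    · intro _
      obtain ⟨x, hx⟩ := h y trivial
      exact ⟨x, hx⟩
  have hle : (univ.filter (fun w : Fin m → Fin k =>
        ¬ ∃ a b : Fin k, image w univ = Finset.Icc a b)).card ≤ k * (k-1)^m := by
    refine le_trans (Finset.card_le_card hsub) (le_trans (Finset.card_biUnion_le) ?_)
    rw [Finset.sum_congr rfl (fun i _ => count_avoid k m i), Finset.sum_const,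
      Finset.card_univ, Fintype.card_fin, smul_eq_mul]
  omega

lemma part3 (k : ℕ) (hk : 1 ≤ k) :
    Filter.Tendsto (fun m : ℕ =>
        ((Finset.univ.filter (fun w : Fin m → Fin k =>
            ∃ a b : Fin k, Finset.image w Finset.univ = Finset.Icc a b)).card : ℝ)
          / (k : ℝ) ^ m)
      Filter.atTop (nhds 1) := by
  have hk0 : (0:ℝ) < k := by exact_mod_cast hk
  set r : ℝ := ((k-1 : ℕ) : ℝ) / k with hr
  have hr0 : 0 ≤ r := by positivity
  have hr1 : r < 1 := by
    rw [hr, div_lt_one hk0]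
    exact_mod_cast Nat.sub_lt (by omega) one_pos
  have hg : Filter.Tendsto (fun m : ℕ => 1 - (k:ℝ) * r ^ m) Filter.atTop (nhds 1) := by
    have := (tendsto_pow_atTop_nhds_zero_of_lt_one hr0 hr1).const_mul (k:ℝ)
    simpa using tendsto_const_nhds.sub this
  refine tendsto_of_tendsto_of_tendsto_of_le_of_le hg tendsto_const_nhds ?_ ?_
  · intro m
    have hkm : (0:ℝ) < (k:ℝ)^m := by positivity
    have hnat := lower k m hk
    have hcast : ((k:ℝ))^m ≤ ((Finset.univ.filter (fun w : Fin m → Fin k =>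
        ∃ a b : Fin k, Finset.image w Finset.univ = Finset.Icc a b)).card : ℝ)
        + (k:ℝ) * ((k-1:ℕ):ℝ)^m := by
      exact_mod_cast hnat
    dsimp only
    rw [div_pow, le_div_iff₀ hkm]
    have : (1 - (k:ℝ) * (((k-1:ℕ):ℝ)^m / (k:ℝ)^m)) * (k:ℝ)^m
        = (k:ℝ)^m - (k:ℝ) * ((k-1:ℕ):ℝ)^m := by
      field_simp
    rw [this]
    linarith
  · intro m
    rw [div_le_one (by positivity)]
    have := Finset.card_filter_le (univ : Finset (Fin m → Fin k))
        (fun w => ∃ a b : Fin k, Finset.image w Finset.univ = Finset.Icc a b)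
    rw [Finset.card_univ, Fintype.card_fun, Fintype.card_fin, Fintype.card_fin] at this
    exact_mod_cast this

/-- The number of gap-free `k`-ary `m`-words with exactly `j` distinct letters is
`(k - j + 1)·j!·S(m,j)`; hence the total number of gap-free `k`-ary `m`-words is
`Σ_{j=1}^k (k-j+1) j! S(m,j)`, which is asymptotic to `k^m` as `m → ∞`. -/
theorem stmt_11 (k : ℕ) (hk : 1 ≤ k) :
    (∀ m j : ℕ, 1 ≤ j → j ≤ k →
      (Finset.univ.filter (fun w : Fin m → Fin k =>
          (∃ a b : Fin k, Finset.image w Finset.univ = Finset.Icc a b) ∧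
          (Finset.image w Finset.univ).card = j)).card
        = (k - j + 1) * j.factorial * stirling2 m j) ∧
    (∀ m : ℕ, 1 ≤ m →
      (Finset.univ.filter (fun w : Fin m → Fin k =>
          ∃ a b : Fin k, Finset.image w Finset.univ = Finset.Icc a b)).card
        = ∑ j ∈ Finset.Icc 1 k, (k - j + 1) * j.factorial * stirling2 m j) ∧
    Filter.Tendsto (fun m : ℕ =>
        ((Finset.univ.filter (fun w : Fin m → Fin k =>
            ∃ a b : Fin k, Finset.image w Finset.univ = Finset.Icc a b)).card : ℝ)
          / (k : ℝ) ^ m)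
      Filter.atTop (nhds 1) := by
  exact ⟨fun m j hj1 hjk => part1 k m j hj1 hjk, fun m hm => part2 k m hm, part3 k hk⟩
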